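/- An irrational rotation-type interval exchange shadowing estimate: let T be a minimal interval exchange transformation on [0,1] with discontinuity set D, P its natural partition into intervals of continuity, and x a point not on the orbit of any discontinuity. Then for every i there exist n_i → ∞ and d_i ∈ D and a side ± such that for all 0 ≤ k ≤ n_i, the points T^{-n_i + k} x and T^k d_i^± lie in the same element of P; hence the P-name of x is shadowed by the one-sided itineraries of the discontinuities. -/

import Mathlib

/-- Two points are in the same element of the natural partition of a minimal interval
exchange: no discontinuity lies (weakly) between them. -/
def SameP (D : Finset ℝ) (a b : ℝ) : Prop :=
  ∀ d ∈ D, d ≤ min a b ∨ max a b < d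

private lemma samep_of_far {D : Finset ℝ} {a b : ℝ}
    (h : ∀ d ∈ D, |b - a| < |d - a|) : SameP D a b := by
  intro d hd
  by_contra hc
  push_neg at hc
  obtain ⟨h1, h2⟩ := hc
  have hda : |d - a| ≤ max a b - min a b := by
    rw [abs_sub_le_iff]
    constructor
    · linarith [min_le_left a b]
    · linarith [le_max_left a b]
  rw [max_sub_min_eq_abs] at hda
  exact absurd (h d hd) (not_lt.mpr hda)

private lemma exists_strictMono_seq {P : ℕ → Prop} (h0 : P 0)
    (hstep : ∀ N, P N → ∃ M, N < M ∧ P M) :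
    ∃ n : ℕ → ℕ, StrictMono n ∧ ∀ i, P (n i) := by
  choose g hg1 hg2 using hstep
  let s : ℕ → {N // P N} := fun i =>
    Nat.rec ⟨0, h0⟩ (fun _ p => ⟨g p.1 p.2, hg2 p.1 p.2⟩) i
  exact ⟨fun i => (s i).1, strictMono_nat_of_lt_succ fun i => hg1 (s i).1 (s i).2,
    fun i => (s i).2⟩

/-- Shadowing for minimal interval exchanges: if `T` is a minimal interval exchange on
`[0,1)` with discontinuity set `D`, and `x` is not on the orbit of any discontinuity,
then there exist `n_i → ∞`, discontinuities `d_i ∈ D` and sides `±` such that for all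
`0 ≤ k ≤ n_i`, `T^{-n_i+k} x` and `T^k d_i^±` lie in the same element of the natural
partition `P`; hence the `P`-name of `x` is shadowed by the one-sided itineraries of
the discontinuities. -/
theorem interval_exchange_shadowing
    (T : Equiv.Perm ℝ) (D : Finset ℝ)
    (hD : ∀ d ∈ D, d ∈ Set.Ioo (0 : ℝ) 1)
    (hrange : (⇑T) '' Set.Ico (0 : ℝ) 1 = Set.Ico (0 : ℝ) 1)
    (htrans : ∀ a ∈ Set.Ico (0 : ℝ) 1, ∀ b ∈ Set.Ico (0 : ℝ) 1,
      SameP D a b → T b - T a = b - a)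
    (hmin : ∀ x ∈ Set.Ico (0 : ℝ) 1, ∀ y ∈ Set.Ico (0 : ℝ) 1, ∀ ε > (0 : ℝ),
      ∃ n : ℕ, |(⇑T)^[n] x - y| < ε)
    (x : ℝ) (hx : x ∈ Set.Ico (0 : ℝ) 1)
    (hxorb : ∀ d ∈ D, ∀ n : ℤ, (T ^ n) d ≠ x) :
    ∃ n : ℕ → ℕ, StrictMono n ∧
      ∀ i, ∃ d ∈ D, ∃ σ : Bool, ∀ k : ℕ, k ≤ n i → ∃ ε > (0 : ℝ), ∀ y : ℝ,
        (if σ then d < y ∧ y < d + ε else d - ε < y ∧ y < d) →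
        SameP D ((T ^ (-(n i : ℤ) + (k : ℤ))) x) ((T ^ (k : ℤ)) y) := by
  classical
  -- T maps [0,1) into itself, and so does T⁻¹
  have hTmem : ∀ a ∈ Set.Ico (0:ℝ) 1, T a ∈ Set.Ico (0:ℝ) 1 := by
    intro a ha
    rw [← hrange]; exact Set.mem_image_of_mem _ ha
  have hTinvmem : ∀ a ∈ Set.Ico (0:ℝ) 1, T⁻¹ a ∈ Set.Ico (0:ℝ) 1 := by
    intro a ha
    rw [← hrange] at ha
    obtain ⟨z, hz, hzeq⟩ := ha
    have : T⁻¹ a = z := by rw [← hzeq]; exact Equiv.symm_apply_apply T z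
    rwa [this]
  -- the backward orbit of x
  set X : ℕ → ℝ := fun m => (T ^ (-(m:ℤ))) x with hX
  have hX0 : X 0 = x := by simp [hX]; rfl
  have hXsucc : ∀ m : ℕ, X (m+1) = T⁻¹ (X m) := by
    intro m
    simp only [hX]
    have h : (-((m+1:ℕ)):ℤ) = (-1) + (-(m:ℤ)) := by push_cast; ring
    rw [h, zpow_add, Equiv.Perm.mul_apply, zpow_neg_one]
  have hXmem : ∀ m, X m ∈ Set.Ico (0:ℝ) 1 := by
    intro m
    induction m with
    | zero => rw [hX0]; exact hx
    | succ m ih => rw [hXsucc]; exact hTinvmem _ ih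
  have hTX : ∀ m, T (X (m+1)) = X m := by
    intro m; rw [hXsucc]; exact Equiv.apply_symm_apply T _
  have hXD : ∀ m, ∀ d ∈ D, X m ≠ d := by
    intro m d hd he
    apply hxorb d hd m
    rw [← he]
    show (T ^ (m:ℤ)) ((T ^ (-(m:ℤ))) x) = x
    rw [← Equiv.Perm.mul_apply, ← zpow_add]
    simp
  -- D is nonempty
  have hDne : D.Nonempty := by
    rw [Finset.nonempty_iff_ne_empty]
    intro hDe
    have hsame : ∀ a b : ℝ, SameP D a b := by
      intro a b d hd; rw [hDe] at hd; simp at hd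
    have h0 : (0:ℝ) ∈ Set.Ico (0:ℝ) 1 := by norm_num
    have hT0 : T 0 = 0 := by
      obtain ⟨z, hz, hzeq⟩ : ∃ z ∈ Set.Ico (0:ℝ) 1, T z = 0 := by
        have : (0:ℝ) ∈ (⇑T) '' Set.Ico (0:ℝ) 1 := by rw [hrange]; norm_num
        obtain ⟨z, hz, hzeq⟩ := this; exact ⟨z, hz, hzeq⟩
      have h1 := htrans 0 h0 z hz (hsame _ _)
      have h2 := (hTmem 0 h0).1
      have h3 := hz.1
      -- T z - T 0 = z, T z = 0
      rw [hzeq] at h1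
      linarith
    have hTid : ∀ n : ℕ, (⇑T)^[n] (0:ℝ) = 0 := by
      intro n
      induction n with
      | zero => simp
      | succ n ih => rw [Function.iterate_succ_apply', ih, hT0]
    obtain ⟨n, hn⟩ := hmin 0 h0 (1/2) (by norm_num) (1/2) (by norm_num)
    rw [hTid n] at hn
    have h12 : (1/2:ℝ) ≤ |(0:ℝ) - 1/2| := by
      rw [abs_sub_comm, abs_of_nonneg] <;> norm_num
    linarith
  -- distance to D
  set f : ℕ → ℝ := fun m => D.inf' hDne (fun d => |X m - d|) with hf
  have hfle : ∀ m, ∀ d ∈ D, f m ≤ |X m - d| := by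
    intro m d hd; exact Finset.inf'_le _ hd
  have hfex : ∀ m, ∃ d ∈ D, f m = |X m - d| := by
    intro m; exact Finset.exists_mem_eq_inf' hDne _
  have hfpos : ∀ m, 0 < f m := by
    intro m
    rw [hf]
    rw [Finset.lt_inf'_iff]
    intro d hd
    rw [abs_pos, sub_ne_zero]
    exact hXD m d hd
  -- propagation lemma
  have prop : ∀ (N : ℕ) (δ : ℝ) (b : ℝ), (∀ m ≤ N, δ ≤ f m) →
      b ∈ Set.Ico (0:ℝ) 1 → |b - X N| < δ →
      ∀ k, k ≤ N → (⇑T)^[k] b ∈ Set.Ico (0:ℝ) 1 ∧ (⇑T)^[k] b - X (N - k) = b - X N := by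
    intro N δ b hfar hb hclose k
    induction k with
    | zero => intro _; exact ⟨by simpa using hb, by simp⟩
    | succ k ih =>
      intro hk1
      have hk : k ≤ N := Nat.le_of_succ_le hk1
      obtain ⟨hmem, hdiff⟩ := ih hk
      have hXm : X (N - k) ∈ Set.Ico (0:ℝ) 1 := hXmem _
      have hsp : SameP D (X (N - k)) ((⇑T)^[k] b) := by
        apply samep_of_far
        intro d hd
        have h1 : δ ≤ f (N - k) := hfar _ (Nat.sub_le N k)
        have h2 : f (N - k) ≤ |X (N-k) - d| := hfle _ _ hd
        have h3 : |(⇑T)^[k] b - X (N - k)| < δ := by rw [hdiff]; exact hclose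
        rw [abs_sub_comm d (X (N-k))]
        linarith
      have ht := htrans _ hXm _ hmem hsp
      have hTs : T (X (N - k)) = X (N - (k+1)) := by
        have he : N - k = (N - (k+1)) + 1 := by omega
        rw [he]; exact hTX _
      refine ⟨?_, ?_⟩
      · rw [Function.iterate_succ_apply']
        exact hTmem _ hmem
      · rw [Function.iterate_succ_apply']
        rw [hTs] at ht
        linarith
  -- the backward orbit comes arbitrarily close to D
  have infl : ∀ r : ℝ, 0 < r → ∃ n, f n < r := by
    intro r hr
    by_contra hc
    push_neg at hc
    set δ := min r (1/2) with hδ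
    have hδpos : 0 < δ := lt_min hr (by norm_num)
    have hδle : δ ≤ 1/2 := min_le_right _ _
    have hδler : δ ≤ r := min_le_left _ _
    have hfar : ∀ m, δ ≤ f m := fun m => le_trans hδler (hc m)
    obtain ⟨q, hq, φ, hφmono, hφlim⟩ :=
      (isCompact_Icc (a := (0:ℝ)) (b := 1)).tendsto_subseq
        (x := X) (fun n => Set.Ico_subset_Icc_self (hXmem n))
    obtain ⟨bs, hbsmem, hbsq⟩ : ∃ bs ∈ Set.Ico (0:ℝ) 1, |bs - q| ≤ δ/2 := by
      rcases le_or_gt q (1/2) with h | h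
      · refine ⟨q + δ/2, ⟨by linarith [hq.1], by linarith⟩, ?_⟩
        have he : q + δ/2 - q = δ/2 := by ring
        rw [he, abs_of_nonneg (by linarith)]
      · refine ⟨q - δ/2, ⟨by linarith, by linarith [hq.2]⟩, ?_⟩
        have he : q - δ/2 - q = -(δ/2) := by ring
        rw [he, abs_neg, abs_of_nonneg (by linarith)]
    obtain ⟨d₀, hd₀⟩ := hDne
    have hd₀m : d₀ ∈ Set.Ico (0:ℝ) 1 := ⟨le_of_lt (hD d₀ hd₀).1, (hD d₀ hd₀).2⟩
    obtain ⟨j, hj⟩ := hmin bs hbsmem d₀ hd₀m (δ/8) (by linarith)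
    obtain ⟨I, hI⟩ := Metric.tendsto_atTop.mp hφlim (δ/8) (by linarith)
    set i := max I j with hi
    have hIi : |X (φ i) - q| < δ/8 := by
      have := hI i (le_max_left _ _)
      rwa [Function.comp_apply, Real.dist_eq] at this
    set n := φ i with hn
    have hjn : j ≤ n := le_trans (le_max_right I j) (hφmono.le_apply)
    have hclose : |bs - X n| < δ := by
      calc |bs - X n| ≤ |bs - q| + |q - X n| := abs_sub_le bs q (X n)
        _ < δ/2 + δ/8 := by
            rw [abs_sub_comm q (X n)]
            have : |X n - q| < δ/8 := hIi
            linarith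
        _ < δ := by linarith
    obtain ⟨_, hdiffj⟩ := prop n δ bs (fun m _ => hfar m) hbsmem hclose j hjn
    have hcontra : f (n - j) < δ := by
      have h1 : f (n - j) ≤ |X (n - j) - d₀| := hfle _ _ hd₀
      have h2 : |X (n-j) - d₀| ≤ |X (n-j) - (⇑T)^[j] bs| + |(⇑T)^[j] bs - d₀| :=
        abs_sub_le _ _ _
      have h3 : |X (n-j) - (⇑T)^[j] bs| < δ * (5/8) := by
        rw [abs_sub_comm, hdiffj]
        calc |bs - X n| ≤ |bs - q| + |q - X n| := abs_sub_le bs q (X n)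
          _ < δ/2 + δ/8 := by
              rw [abs_sub_comm q (X n)]; linarith
          _ = δ * (5/8) := by ring
      linarith
    linarith [hfar (n - j), hcontra]
  -- record times exist and can be iterated
  have hrec : ∀ N : ℕ, (∀ m < N, f N < f m) → ∃ M, N < M ∧ (∀ m < M, f M < f m) := by
    intro N hN
    obtain ⟨n₀, hn₀⟩ := infl (f N) (hfpos N)
    have hex : ∃ m, f m < f N := ⟨n₀, hn₀⟩
    have hMlt : f (Nat.find hex) < f N := Nat.find_spec hex
    have hMrec : ∀ m < Nat.find hex, f (Nat.find hex) < f m := by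
      intro m hm
      have := Nat.find_min hex hm
      push_neg at this
      exact lt_of_lt_of_le hMlt this
    refine ⟨Nat.find hex, ?_, hMrec⟩
    rcases lt_trichotomy (Nat.find hex) N with h | h | h
    · exact absurd hMlt (not_lt.mpr (le_of_lt (hN _ h)))
    · rw [h] at hMlt; exact absurd hMlt (lt_irrefl _)
    · exact h
  obtain ⟨n, hmono, hrecall⟩ :=
    exists_strictMono_seq (P := fun N => ∀ m < N, f N < f m) (by omega) hrec
  refine ⟨n, hmono, fun i => ?_⟩
  set N := n i with hN
  have hNrec : ∀ m < N, f N < f m := hrecall i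
  obtain ⟨d, hd, hdval⟩ := hfex N
  have hne : X N ≠ d := hXD N d hd
  have hδpos : 0 < f N := hfpos N
  have hfarN : ∀ m ≤ N, f N ≤ f m := by
    intro m hm
    rcases Nat.lt_or_ge m N with h | h
    · exact le_of_lt (hNrec m h)
    · have : m = N := le_antisymm hm h
      rw [this]
  -- the common closing argument
  have main : ∀ (y : ℝ), y ∈ Set.Ico (0:ℝ) 1 → |y - X N| < f N → ∀ k ≤ N,
      SameP D ((T ^ (-(N:ℤ) + (k:ℤ))) x) ((T ^ (k:ℤ)) y) := by
    intro y hymem hyval k hk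
    obtain ⟨hmem, hdiff⟩ := prop N (f N) y hfarN hymem hyval k hk
    have hsp : SameP D (X (N - k)) ((⇑T)^[k] y) := by
      apply samep_of_far
      intro d' hd'
      have h1 : |(⇑T)^[k] y - X (N-k)| < f N := by rw [hdiff]; exact hyval
      have h2 : f N ≤ f (N - k) := hfarN _ (Nat.sub_le _ _)
      have h3 : f (N-k) ≤ |X (N-k) - d'| := hfle _ _ hd'
      rw [abs_sub_comm d' (X (N-k))]
      linarith
    have hg1 : (T ^ (-(N:ℤ) + (k:ℤ))) x = X (N - k) := by
      simp only [hX]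
      have h : (-(N:ℤ) + (k:ℤ)) = -(((N - k : ℕ)):ℤ) := by
        push_cast [Nat.cast_sub hk]; ring
      rw [h]
    have hg2 : (T ^ ((k:ℕ):ℤ)) y = (⇑T)^[k] y := by
      rw [zpow_natCast, ← Equiv.Perm.iterate_eq_pow]
    rw [hg1, hg2]
    exact hsp
  rcases lt_or_gt_of_ne hne with hlt | hgt
  · -- X N < d : approach d from the left : σ = false
    have habs : f N = d - X N := by
      rw [hdval, abs_of_neg (by linarith)]; ring
    refine ⟨d, hd, false, fun k hk => ⟨f N, hδpos, fun y hy => ?_⟩⟩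
    simp only [Bool.false_eq_true, if_false] at hy
    obtain ⟨hy1, hy2⟩ := hy
    have hymem : y ∈ Set.Ico (0:ℝ) 1 := by
      constructor
      · have := (hXmem N).1; linarith [habs]
      · have := (hD d hd).2; linarith
    have hyval : |y - X N| < f N := by
      rw [abs_lt]; constructor <;> linarith [habs]
    exact main y hymem hyval k hk
  · -- X N > d : approach d from the right : σ = true
    have habs : f N = X N - d := by
      rw [hdval, abs_of_pos (by linarith)]
    refine ⟨d, hd, true, fun k hk => ⟨f N, hδpos, fun y hy => ?_⟩⟩
    simp only [if_true] at hy
    obtain ⟨hy1, hy2⟩ := hy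
    have hymem : y ∈ Set.Ico (0:ℝ) 1 := by
      constructor
      · have := (hD d hd).1; linarith
      · have := (hXmem N).2; linarith [habs]
    have hyval : |y - X N| < f N := by
      rw [abs_lt]; constructor <;> linarith [habs]
    exact main y hymem hyval k hk
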